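/- Let X be a pre-Riesz space and let P and Q be band projections on X. Then: (a) P leaves the range of Q invariant, i.e. P(QX) ⊆ QX; (b) P and Q commute, i.e. PQ = QP; (c) the composition PQ is again a band projection; (d) the range of PQ equals PX ∩ QX. -/

import Mathlib

open Pointwise

variable {X : Type*} [AddCommGroup X] [PartialOrder X] [IsOrderedAddMonoid X] [Module ℝ X]
    [PosSMulStrictMono ℝ X] [PosSMulReflectLT ℝ X]

/-- Two elements of an ordered vector space are disjoint if the sets `{x+y, -x-y}` and
`{x-y, y-x}` have the same set of upper bounds. -/
def UDisjoint (x y : X) : Prop :=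
  upperBounds ({x + y, -x - y} : Set X) = upperBounds ({x - y, y - x} : Set X)

/-- The disjoint complement `S^⊥` of a set `S`. -/
def dComp (S : Set X) : Set X := {x : X | ∀ s ∈ S, UDisjoint x s}

/-- A band: a set equal to its double disjoint complement. -/
def IsBand (B : Set X) : Prop := B = dComp (dComp B)

/-- A projection band: a band `B` with `B ∩ B^⊥ = {0}` and `B + B^⊥ = X`. -/
def IsProjBand (B : Set X) : Prop :=
  IsBand B ∧ B ∩ dComp B = {0} ∧ ∀ x : X, ∃ b ∈ B, ∃ c ∈ dComp B, x = b + c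

/-- A positive linear operator. -/
def IsPosMap (T : X →ₗ[ℝ] X) : Prop := ∀ x : X, 0 ≤ x → 0 ≤ T x

/-- A band projection: a linear projection whose range is a projection band and whose
kernel is the disjoint complement of the range. -/
def IsBandProj (P : X →ₗ[ℝ] X) : Prop :=
  P ∘ₗ P = P ∧ IsProjBand (Set.range ⇑P) ∧ (LinearMap.ker P : Set X) = dComp (Set.range ⇑P)

/-- A pre-Riesz space: for every nonempty finite `A ⊆ X` and every `x`, if the upper bounds
of `x + A` are contained in the upper bounds of `A`, then `x ≥ 0`. -/
def IsPreRiesz (X : Type*) [AddCommGroup X] [PartialOrder X] [IsOrderedAddMonoid X] [Module ℝ X]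
    [PosSMulStrictMono ℝ X] [PosSMulReflectLT ℝ X] : Prop :=
  ∀ (A : Set X) (x : X), A.Finite → A.Nonempty →
    upperBounds ((x + ·) '' A) ⊆ upperBounds A → 0 ≤ x

lemma mem_ub_pair {a b t : X} : t ∈ upperBounds ({a, b} : Set X) ↔ a ≤ t ∧ b ≤ t := by
  simp [upperBounds]

lemma udisjoint_iff_N {x y : X} :
    UDisjoint x y ↔ ∀ t, (x + y ≤ t ∧ -(x + y) ≤ t) ↔ (x - y ≤ t ∧ -(x - y) ≤ t) := by
  unfold UDisjoint
  rw [Set.ext_iff]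
  apply forall_congr'
  intro t
  rw [mem_ub_pair, mem_ub_pair,
    show -x - y = -(x + y) by abel, show y - x = -(x - y) by abel]

lemma udisjoint_symm {x y : X} (h : UDisjoint x y) : UDisjoint y x := by
  rw [udisjoint_iff_N] at h ⊢
  intro t
  rw [show y + x = x + y by abel, show y - x = -(x - y) by abel, neg_neg]
  exact (h t).trans and_comm

lemma udisjoint_neg_right {x y : X} (h : UDisjoint x y) : UDisjoint x (-y) := by
  rw [udisjoint_iff_N] at h ⊢
  intro t
  rw [show x + -y = x - y by abel, show x - -y = x + y by abel]
  exact (h t).symm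

lemma udisjoint_neg_left {x y : X} (h : UDisjoint x y) : UDisjoint (-x) y :=
  udisjoint_symm (udisjoint_neg_right (udisjoint_symm h))

lemma udisjoint_zero {y : X} : UDisjoint (0 : X) y := by
  rw [udisjoint_iff_N]
  intro t
  rw [zero_add, zero_sub, neg_neg]
  exact and_comm

lemma half_nonneg {x : X} (h : 0 ≤ x + x) : 0 ≤ x := by
  have h2 : x + x = (2:ℝ) • x := (two_smul ℝ x).symm
  have h3 := smul_nonneg (by norm_num : (0:ℝ) ≤ 1/2) h
  rwa [h2, smul_smul, (by norm_num : (1/2 : ℝ) * 2 = 1), one_smul] at h3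

lemma udisjoint_self {x : X} (h : UDisjoint x x) : x = 0 := by
  rw [udisjoint_iff_N] at h
  have h0 : x - x ≤ 0 ∧ -(x - x) ≤ 0 := by
    rw [sub_self, neg_zero]; exact ⟨le_refl 0, le_refl 0⟩
  have h1 := (h 0).mpr h0
  have hge : 0 ≤ x + x := by
    have h2 := h1.2
    rw [neg_le, neg_zero] at h2
    exact h2
  have hxx : x + x = 0 := le_antisymm h1.1 hge
  have h3 : (1/2 : ℝ) • (x + x) = x := by
    rw [← two_smul ℝ x, smul_smul]; norm_num
  rw [hxx, smul_zero] at h3; exact h3.symm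

lemma bandproj_key (hX_pr : ∀ (A : Set X) (x : X), A.Finite → A.Nonempty →
      upperBounds ((x + ·) '' A) ⊆ upperBounds A → 0 ≤ x)
    (P : X →ₗ[ℝ] X)
    (hidem : ∀ z, P (P z) = P z)
    (hpos : ∀ z, 0 ≤ z → 0 ≤ P z)
    (hcpos : ∀ z, 0 ≤ z → P z ≤ z)
    {y s t : X} (h : UDisjoint y s)
    (ht1 : P y + s ≤ t) (ht2 : -(P y + s) ≤ t) : P y - s ≤ t := by
  set w := t - (P y - s) with hw
  have hN := udisjoint_iff_N.mp h
  set A : Set X := {y + s, -(y + s), y - s, -(y - s)} with hA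
  have hsub : upperBounds ((w + ·) '' A) ⊆ upperBounds A := by
    intro t' ht'
    have hmem : ∀ a ∈ A, w + a ≤ t' := fun a ha => ht' (Set.mem_image_of_mem _ ha)
    have h3 : t + (y - P y) ≤ t' := by
      have := hmem (y - s) (by rw [hA]; simp)
      rwa [show w + (y - s) = t + (y - P y) by rw [hw]; abel] at this
    have h2 : t - P y - y ≤ t' := by
      have := hmem (-(y + s)) (by rw [hA]; simp)
      rwa [show w + (-(y + s)) = t - P y - y by rw [hw]; abel] at this
    -- G1
    have G1 : y + s ≤ t' :=
      calc y + s = (P y + s) + (y - P y) := by abel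
        _ ≤ t + (y - P y) := add_le_add_left ht1 _
        _ ≤ t' := h3
    -- useful positivity inputs
    have k2 : (0:X) ≤ t + (P y + s) := by
      have := sub_nonneg.mpr ht2; rwa [sub_neg_eq_add] at this
    -- P t ≤ P t'
    have PtPt' : P t ≤ P t' := by
      have hp := hpos _ (sub_nonneg.mpr h3)
      rw [map_sub, map_add, map_sub, hidem, sub_self, add_zero] at hp
      exact sub_nonneg.mp hp
    -- -(P y + P s) ≤ P t
    have Pt_lb : -(P y + P s) ≤ P t := by
      have hp2 := hpos _ k2
      rw [map_add, map_add, hidem] at hp2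
      exact neg_le_iff_add_nonneg.mpr hp2
    -- -(s - P s) ≤ t - P t
    have IT : -(s - P s) ≤ t - P t := by
      have hc := sub_nonneg.mpr (hcpos _ k2)
      rw [map_add, map_add, hidem,
        show (t + (P y + s)) - (P t + (P y + P s)) = ((t - P t) + (s - P s)) by abel] at hc
      exact neg_le_iff_add_nonneg.mpr hc
    -- (t - P t) - (y - P y) ≤ t' - P t'
    have IT' : (t - P t) - (y - P y) ≤ t' - P t' := by
      have k3 : (0:X) ≤ t' - (t - P y - y) := sub_nonneg.mpr h2
      have hc2 := sub_nonneg.mpr (hcpos _ k3)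
      rw [map_sub, map_sub, map_sub, hidem,
        show (t' - (t - P y - y)) - (P t' - (P t - P y - P y)) =
          (t' - P t') - ((t - P t) - (y - P y)) by abel] at hc2
      exact sub_nonneg.mp hc2
    -- G2
    have G2 : -(y + s) ≤ t' := by
      have hsum := add_le_add (le_trans Pt_lb PtPt')
        (le_trans (sub_le_sub_right IT (y - P y)) IT')
      calc -(y + s) = -(P y + P s) + (-(s - P s) - (y - P y)) := by abel
        _ ≤ P t' + (t' - P t') := hsum
        _ = t' := by abel
    have G34 := (hN t').mp ⟨G1, G2⟩
    -- conclude membership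
    intro a ha
    rw [hA] at ha
    simp only [Set.mem_insert_iff, Set.mem_singleton_iff] at ha
    rcases ha with rfl | rfl | rfl | rfl
    · exact G1
    · exact G2
    · exact G34.1
    · exact G34.2
  have hw0 : 0 ≤ w := hX_pr A w (Set.toFinite _) ⟨y + s, by rw [hA]; simp⟩ hsub
  exact sub_nonneg.mp hw0

lemma bandproj_udisjoint (hX_pr : ∀ (A : Set X) (x : X), A.Finite → A.Nonempty →
      upperBounds ((x + ·) '' A) ⊆ upperBounds A → 0 ≤ x)
    (P : X →ₗ[ℝ] X)
    (hidem : ∀ z, P (P z) = P z)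
    (hpos : ∀ z, 0 ≤ z → 0 ≤ P z)
    (hcpos : ∀ z, 0 ≤ z → P z ≤ z)
    {y s : X} (h : UDisjoint y s) : UDisjoint (P y) s := by
  rw [udisjoint_iff_N]
  intro t
  constructor
  · rintro ⟨h1, h2⟩
    have h2' : -(P y + s) ≤ t := h2
    constructor
    · exact bandproj_key hX_pr P hidem hpos hcpos h h1 h2'
    · have hyn : UDisjoint (-y) (-s) := udisjoint_neg_left (udisjoint_neg_right h)
      have := bandproj_key hX_pr P hidem hpos hcpos hyn
        (t := t) ?_ ?_
      · rwa [show P (-y) - -s = -(P y - s) by rw [map_neg]; abel] at this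
      · rwa [show P (-y) + -s = -(P y + s) by rw [map_neg]; abel]
      · rwa [show -(P (-y) + -s) = P y + s by rw [map_neg]; abel]
  · rintro ⟨h1, h2⟩
    constructor
    · have hyn : UDisjoint y (-s) := udisjoint_neg_right h
      have := bandproj_key hX_pr P hidem hpos hcpos hyn (t := t) ?_ ?_
      · rwa [show P y - -s = P y + s by abel] at this
      · rwa [show P y + -s = P y - s by abel]
      · rwa [show -(P y + -s) = -(P y - s) by abel]
    · have hyn : UDisjoint (-y) s := udisjoint_neg_left h
      have := bandproj_key hX_pr P hidem hpos hcpos hyn (t := t) ?_ ?_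
      · rwa [show P (-y) - s = -(P y + s) by rw [map_neg]; abel] at this
      · rwa [show P (-y) + s = -(P y - s) by rw [map_neg]; abel]
      · rwa [show -(P (-y) + s) = P y - s by rw [map_neg]; abel]

lemma isBandProj_idem {P : X →ₗ[ℝ] X} (hP : IsBandProj P) : ∀ z, P (P z) = P z := by
  intro z
  have := LinearMap.ext_iff.mp hP.1 z
  simpa using this

lemma isBandProj_ker {P : X →ₗ[ℝ] X} (hP : IsBandProj P) {z : X} :
    P z = 0 ↔ z ∈ dComp (Set.range ⇑P) := by
  have := Set.ext_iff.mp hP.2.2 z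
  simpa [LinearMap.mem_ker] using this

lemma isBandProj_pos {P : X →ₗ[ℝ] X} (hP : IsBandProj P) :
    ∀ x, 0 ≤ x → 0 ≤ P x ∧ P x ≤ x := by
  intro x hx
  obtain ⟨b, hb, c, hc, hxeq⟩ := hP.2.1.2.2 x
  have hPb : P b = b := by obtain ⟨z, rfl⟩ := hb; exact isBandProj_idem hP z
  have hPc : P c = 0 := (isBandProj_ker hP).mpr hc
  have hPx : P x = b := by rw [hxeq, map_add, hPb, hPc, add_zero]
  have hdisj : UDisjoint c b := hc b hb
  have hN := udisjoint_iff_N.mp hdisj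
  have hIn : c + b ≤ x ∧ -(c + b) ≤ x := by
    constructor
    · rw [hxeq]; exact le_of_eq (by abel)
    · calc -(c + b) = -x := by rw [hxeq]; abel
        _ ≤ 0 := neg_nonpos_of_nonneg hx
        _ ≤ x := hx
  have hOut := (hN x).mp hIn
  have hb0 : 0 ≤ b := by
    have h1 : 0 ≤ x - (c - b) := sub_nonneg.mpr hOut.1
    rw [hxeq, show (b + c) - (c - b) = b + b by abel] at h1
    exact half_nonneg h1
  have hc0 : 0 ≤ c := by
    have h1 : 0 ≤ x - -(c - b) := sub_nonneg.mpr hOut.2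
    rw [hxeq, show (b + c) - -(c - b) = c + c by abel] at h1
    exact half_nonneg h1
  constructor
  · rw [hPx]; exact hb0
  · rw [hPx, hxeq]; exact le_add_of_nonneg_right hc0

/-- Interaction of two band projections. -/
theorem stmt_5 (hX : IsPreRiesz X) (P Q : X →ₗ[ℝ] X)
    (hP : IsBandProj P) (hQ : IsBandProj Q) :
    (∀ y ∈ Set.range ⇑Q, P y ∈ Set.range ⇑Q) ∧
    P ∘ₗ Q = Q ∘ₗ P ∧
    IsBandProj (P ∘ₗ Q) ∧
    Set.range ⇑(P ∘ₗ Q) = Set.range ⇑P ∩ Set.range ⇑Q := by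
  have hPidem := isBandProj_idem hP
  have hQidem := isBandProj_idem hQ
  have hPpos : ∀ z, 0 ≤ z → 0 ≤ P z := fun z hz => (isBandProj_pos hP z hz).1
  have hPcpos : ∀ z, 0 ≤ z → P z ≤ z := fun z hz => (isBandProj_pos hP z hz).2
  have hQpos : ∀ z, 0 ≤ z → 0 ≤ Q z := fun z hz => (isBandProj_pos hQ z hz).1
  have hQcpos : ∀ z, 0 ≤ z → Q z ≤ z := fun z hz => (isBandProj_pos hQ z hz).2
  have lemAP : ∀ {y s : X}, UDisjoint y s → UDisjoint (P y) s :=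
    fun h => bandproj_udisjoint hX P hPidem hPpos hPcpos h
  have lemAQ : ∀ {y s : X}, UDisjoint y s → UDisjoint (Q y) s :=
    fun h => bandproj_udisjoint hX Q hQidem hQpos hQcpos h
  have hQfix : ∀ w ∈ Set.range ⇑Q, Q w = w := by rintro w ⟨z, rfl⟩; exact hQidem z
  have hPfix : ∀ w ∈ Set.range ⇑P, P w = w := by rintro w ⟨z, rfl⟩; exact hPidem z
  -- (a) invariance
  have inv : ∀ y ∈ Set.range ⇑Q, P y ∈ Set.range ⇑Q := by
    intro y hy
    have hQband : Set.range ⇑Q = dComp (dComp (Set.range ⇑Q)) := hQ.2.1.1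
    rw [hQband]
    exact fun s hs => lemAP (udisjoint_symm (hs y hy))
  -- P preserves ker Q
  have invk : ∀ z, Q z = 0 → Q (P z) = 0 := by
    intro z hz
    have hz' : z ∈ dComp (Set.range ⇑Q) := (isBandProj_ker hQ).mp hz
    exact (isBandProj_ker hQ).mpr (fun s hs => lemAP (hz' s hs))
  -- (b) commutation
  have comm : ∀ x, Q (P x) = P (Q x) := by
    intro x
    have h1 : Q (P (Q x)) = P (Q x) := hQfix _ (inv (Q x) ⟨x, rfl⟩)
    have h2 : Q (P (x - Q x)) = 0 := invk _ (by rw [map_sub, hQidem, sub_self])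
    calc Q (P x) = Q (P (Q x + (x - Q x))) := by rw [show Q x + (x - Q x) = x by abel]
      _ = Q (P (Q x)) + Q (P (x - Q x)) := by rw [map_add, map_add]
      _ = P (Q x) := by rw [h1, h2, add_zero]
  have hcomm : P ∘ₗ Q = Q ∘ₗ P := by
    ext z
    exact (comm z).symm
  set R := P ∘ₗ Q with hRdef
  have hRapp : ∀ z, R z = P (Q z) := fun z => rfl
  have hRidem : ∀ z, R (R z) = R z := by
    intro z
    show P (Q (P (Q z))) = P (Q z)
    rw [comm (Q z), hPidem, hQidem]
  have hRpos : ∀ z, 0 ≤ z → 0 ≤ R z := fun z hz => hPpos _ (hQpos _ hz)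
  have hRcpos : ∀ z, 0 ≤ z → R z ≤ z := by
    intro z hz
    have h1 : P (Q z) ≤ P z := by
      have h2 := hPpos _ (sub_nonneg.mpr (hQcpos z hz))
      rw [map_sub] at h2
      exact sub_nonneg.mp h2
    exact le_trans h1 (hPcpos z hz)
  -- (d) range
  have hrange : Set.range ⇑R = Set.range ⇑P ∩ Set.range ⇑Q := by
    apply Set.Subset.antisymm
    · rintro x ⟨z, rfl⟩
      exact ⟨⟨Q z, (hRapp z).symm⟩, ⟨P z, (comm z).trans (hRapp z).symm⟩⟩
    · rintro x ⟨hxP, hxQ⟩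
      exact ⟨x, by rw [hRapp, hQfix x hxQ, hPfix x hxP]⟩
  have hRfix : ∀ w ∈ Set.range ⇑R, R w = w := by rintro w ⟨z, rfl⟩; exact hRidem z
  -- ker R ⊆ dComp (range R) : pairwise helper
  have hker_pair : ∀ x w t : X, R x = 0 → R w = w → x + w ≤ t → -(x + w) ≤ t →
      x - w ≤ t ∧ -(x - w) ≤ t := by
    intro x w t hx hw h1 h2
    have h2' : (0:X) ≤ t + (x + w) := by
      have := sub_nonneg.mpr h2; rwa [sub_neg_eq_add] at this
    have k1 := hRpos _ (sub_nonneg.mpr h1)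
    rw [map_sub, map_add, hx, hw, zero_add] at k1
    have kw : w ≤ R t := sub_nonneg.mp k1
    have k2 := hRpos _ h2'
    rw [map_add, map_add, hx, hw, zero_add] at k2
    have kw' : -w ≤ R t := neg_le_iff_add_nonneg.mpr k2
    have i1 : x ≤ t - R t := by
      have hc := sub_nonneg.mpr (hRcpos _ (sub_nonneg.mpr h1))
      rw [map_sub, map_add, hx, hw, zero_add,
        show (t - (x + w)) - (R t - w) = (t - R t) - x by abel] at hc
      exact sub_nonneg.mp hc
    have i2 : -x ≤ t - R t := by
      have hc := sub_nonneg.mpr (hRcpos _ h2')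
      rw [map_add, map_add, hx, hw, zero_add,
        show (t + (x + w)) - (R t + w) = (t - R t) + x by abel] at hc
      exact neg_le_iff_add_nonneg.mpr hc
    constructor
    · calc x - w = x + (-w) := by abel
        _ ≤ (t - R t) + R t := add_le_add i1 kw'
        _ = t := by abel
    · calc -(x - w) = (-x) + w := by abel
        _ ≤ (t - R t) + R t := add_le_add i2 kw
        _ = t := by abel
  have hker1 : ∀ x, R x = 0 → x ∈ dComp (Set.range ⇑R) := by
    intro x hx w hw
    have hRw : R w = w := hRfix w hw
    rw [udisjoint_iff_N]
    intro t
    constructor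
    · rintro ⟨h1, h2⟩; exact hker_pair x w t hx hRw h1 h2
    · rintro ⟨h1, h2⟩
      have hRw' : R (-w) = -w := by rw [map_neg, hRw]
      have hres := hker_pair x (-w) t hx hRw'
        (by rwa [show x + -w = x - w by abel])
        (by rwa [show -(x + -w) = -(x - w) by abel])
      constructor
      · have := hres.1; rwa [show x - -w = x + w by abel] at this
      · have := hres.2; rwa [show -(x - -w) = -(x + w) by abel] at this
  have hker2 : ∀ x, x ∈ dComp (Set.range ⇑R) → R x = 0 := by
    intro x hx
    have h1 : UDisjoint x (R x) := hx (R x) ⟨x, rfl⟩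
    have h3 : UDisjoint (P (Q x)) (R x) := lemAP (lemAQ h1)
    have e : P (Q x) = R x := (hRapp x).symm
    rw [e] at h3
    exact udisjoint_self h3
  -- band property of range R
  have hRband : Set.range ⇑R = dComp (dComp (Set.range ⇑R)) := by
    apply Set.Subset.antisymm
    · intro w hw k hk
      exact udisjoint_symm (hk w hw)
    · intro x hx
      have hd : R (x - R x) = 0 := by rw [map_sub, hRidem, sub_self]
      have hxd : UDisjoint x (x - R x) := hx _ (hker1 _ hd)
      set S : X →ₗ[ℝ] X := LinearMap.id - R with hSdef
      have hSapp : ∀ z, S z = z - R z := by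
        intro z
        rw [hSdef]
        simp [LinearMap.sub_apply]
      have hSidem : ∀ z, S (S z) = S z := by
        intro z
        simp only [hSapp]
        rw [map_sub, hRidem]
        abel
      have hSpos : ∀ z, 0 ≤ z → 0 ≤ S z := by
        intro z hz
        rw [hSapp]
        exact sub_nonneg.mpr (hRcpos z hz)
      have hScpos : ∀ z, 0 ≤ z → S z ≤ z := by
        intro z hz
        rw [hSapp]
        exact sub_le_self _ (hRpos z hz)
      have hS := bandproj_udisjoint hX S hSidem hSpos hScpos hxd
      rw [hSapp] at hS
      exact ⟨x, (sub_eq_zero.mp (udisjoint_self hS)).symm⟩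
  -- intersection
  have hinter : Set.range ⇑R ∩ dComp (Set.range ⇑R) = {0} := by
    apply Set.Subset.antisymm
    · rintro x ⟨hx1, hx2⟩
      have := udisjoint_self (hx2 x hx1)
      simp [this]
    · intro x hx
      rw [Set.mem_singleton_iff] at hx
      subst hx
      exact ⟨⟨0, map_zero R⟩, fun s _ => udisjoint_zero⟩
  -- decomposition
  have hdecomp : ∀ x : X, ∃ b ∈ Set.range ⇑R, ∃ c ∈ dComp (Set.range ⇑R), x = b + c := by
    intro x
    exact ⟨R x, ⟨x, rfl⟩, x - R x,
      hker1 _ (by rw [map_sub, hRidem, sub_self]), by abel⟩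
  have hRcomp : R ∘ₗ R = R := by
    ext z
    exact hRidem z
  have hkerset : (LinearMap.ker R : Set X) = dComp (Set.range ⇑R) := by
    ext z
    simp only [SetLike.mem_coe, LinearMap.mem_ker]
    exact ⟨hker1 z, hker2 z⟩
  exact ⟨inv, hcomm, ⟨hRcomp, ⟨hRband, hinter, hdecomp⟩, hkerset⟩, hrange⟩
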